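/- (Homogeneity of the series coefficients: a_k = φ_k a₁^k.) Let a, b, c, d, g, h be real numbers and α ∈ ℂ. Suppose the sequence (a_k)_{k≥1} of complex numbers satisfies the reversible recursion with parameter α. Then for every t ∈ ℂ the rescaled sequence (t^k a_k)_{k≥1} also satisfies the reversible recursion with parameter α. Consequently, if p(kα) = (kα)⁴ − b(kα)² + a ≠ 0 for all integers k ≥ 2, then each coefficient has the form a_k = φ_k a₁^k where φ_k depends only on α and on a, b, c, d, g, h (and not on a₁). -/
import Mathlib


/-- A sequence `(a_k)_{k≥1}` satisfies the reversible recursion with parameter `α`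
if for every `k ≥ 2`:
`((kα)⁴ − b(kα)² + a)·a_k = Σ_{i=1}^{k−1} (c(k−i)²α² + d·i(k−i)α² + g)·a_{k−i} a_i
  + h·Σ_{j=2}^{k−1} Σ_{l=1}^{j−1} a_{k−j} a_{j−l} a_l`. -/
def ReversibleRec (a b c d g h : ℝ) (α : ℂ) (A : ℕ → ℂ) : Prop :=
  ∀ k : ℕ, 2 ≤ k →
    (((k : ℂ) * α) ^ 4 - (b : ℂ) * ((k : ℂ) * α) ^ 2 + (a : ℂ)) * A k =
      (∑ i ∈ Finset.Ico 1 k,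
        ((c : ℂ) * ((k - i : ℕ) : ℂ) ^ 2 * α ^ 2
          + (d : ℂ) * (i : ℂ) * ((k - i : ℕ) : ℂ) * α ^ 2 + (g : ℂ))
          * A (k - i) * A i)
      + (h : ℂ) * ∑ j ∈ Finset.Ico 2 k, ∑ l ∈ Finset.Ico 1 j,
          A (k - j) * A (j - l) * A l

private lemma revrec_scale (a b c d g h : ℝ) (α : ℂ) (A : ℕ → ℂ) (t : ℂ)
    (hA : ReversibleRec a b c d g h α A) :
    ReversibleRec a b c d g h α (fun k => t ^ k * A k) := by
  intro k hk
  have hAk := hA k hk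
  simp only
  calc (((k : ℂ) * α) ^ 4 - (b : ℂ) * ((k : ℂ) * α) ^ 2 + (a : ℂ)) * (t ^ k * A k)
      = t ^ k * ((((k : ℂ) * α) ^ 4 - (b : ℂ) * ((k : ℂ) * α) ^ 2 + (a : ℂ)) * A k) := by ring
    _ = t ^ k * ((∑ i ∈ Finset.Ico 1 k,
        ((c : ℂ) * ((k - i : ℕ) : ℂ) ^ 2 * α ^ 2
          + (d : ℂ) * (i : ℂ) * ((k - i : ℕ) : ℂ) * α ^ 2 + (g : ℂ))
          * A (k - i) * A i)
      + (h : ℂ) * ∑ j ∈ Finset.Ico 2 k, ∑ l ∈ Finset.Ico 1 j,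
          A (k - j) * A (j - l) * A l) := by rw [hAk]
    _ = _ := by
        rw [mul_add]
        congr 1
        · rw [Finset.mul_sum]
          refine Finset.sum_congr rfl fun i hi => ?_
          rw [Finset.mem_Ico] at hi
          have hik : k - i + i = k := Nat.sub_add_cancel hi.2.le
          calc t ^ k * (((c : ℂ) * ((k - i : ℕ) : ℂ) ^ 2 * α ^ 2
              + (d : ℂ) * (i : ℂ) * ((k - i : ℕ) : ℂ) * α ^ 2 + (g : ℂ)) * A (k - i) * A i)
              = t ^ (k - i + i) * (((c : ℂ) * ((k - i : ℕ) : ℂ) ^ 2 * α ^ 2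
                + (d : ℂ) * (i : ℂ) * ((k - i : ℕ) : ℂ) * α ^ 2 + (g : ℂ)) * A (k - i) * A i) := by
                  rw [hik]
            _ = _ := by rw [pow_add]; ring
        · rw [mul_left_comm]
          congr 1
          rw [Finset.mul_sum]
          refine Finset.sum_congr rfl fun j hj => ?_
          rw [Finset.mem_Ico] at hj
          rw [Finset.mul_sum]
          refine Finset.sum_congr rfl fun l hl => ?_
          rw [Finset.mem_Ico] at hl
          have hjl : k - j + (j - l + l) = k := by omega
          calc t ^ k * (A (k - j) * A (j - l) * A l)
              = t ^ (k - j + (j - l + l)) * (A (k - j) * A (j - l) * A l) := by rw [hjl]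
            _ = _ := by rw [pow_add, pow_add]; ring

private lemma revrec_unique (a b c d g h : ℝ) (α : ℂ)
    (hp : ∀ k : ℕ, 2 ≤ k →
        ((k : ℂ) * α) ^ 4 - (b : ℂ) * ((k : ℂ) * α) ^ 2 + (a : ℂ) ≠ 0)
    (A B : ℕ → ℂ) (hA : ReversibleRec a b c d g h α A)
    (hB : ReversibleRec a b c d g h α B) (h1 : A 1 = B 1) :
    ∀ k : ℕ, 1 ≤ k → A k = B k := by
  intro k
  induction k using Nat.strong_induction_on with
  | _ k ih =>
    intro hk
    rcases eq_or_lt_of_le hk with hk1 | hk2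
    · rw [← hk1]; exact h1
    · have hk2 : 2 ≤ k := hk2
      have hAk := hA k hk2
      have hBk := hB k hk2
      refine mul_left_cancel₀ (hp k hk2) ?_
      rw [hAk, hBk]
      congr 1
      · refine Finset.sum_congr rfl fun i hi => ?_
        rw [Finset.mem_Ico] at hi
        rw [ih (k - i) (by omega) (by omega), ih i (by omega) (by omega)]
      · congr 1
        refine Finset.sum_congr rfl fun j hj => ?_
        rw [Finset.mem_Ico] at hj
        refine Finset.sum_congr rfl fun l hl => ?_
        rw [Finset.mem_Ico] at hl
        rw [ih (k - j) (by omega) (by omega), ih (j - l) (by omega) (by omega),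
          ih l (by omega) (by omega)]

private lemma revrec_zero (a b c d g h : ℝ) (α : ℂ) :
    ReversibleRec a b c d g h α (fun _ => 0) := by
  intro k hk
  simp

theorem coefficients_homogeneity (a b c d g h : ℝ) (α : ℂ) :
    (∀ (A : ℕ → ℂ) (t : ℂ), ReversibleRec a b c d g h α A →
      ReversibleRec a b c d g h α (fun k => t ^ k * A k)) ∧
    ((∀ k : ℕ, 2 ≤ k →
        ((k : ℂ) * α) ^ 4 - (b : ℂ) * ((k : ℂ) * α) ^ 2 + (a : ℂ) ≠ 0) →
      ∃ φ : ℕ → ℂ, ∀ A : ℕ → ℂ, ReversibleRec a b c d g h α A →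
        ∀ k : ℕ, 1 ≤ k → A k = φ k * (A 1) ^ k) := by
  constructor
  · exact fun A t hA => revrec_scale a b c d g h α A t hA
  · intro hp
    by_cases hex : ∃ B : ℕ → ℂ, ReversibleRec a b c d g h α B ∧ B 1 = 1
    · obtain ⟨B, hB, hB1⟩ := hex
      refine ⟨B, fun A hA k hk => ?_⟩
      have hC := revrec_scale a b c d g h α B (A 1) hB
      have hC1 : (fun k => (A 1) ^ k * B k) 1 = A 1 := by simp [hB1]
      have := revrec_unique a b c d g h α hp A _ hA hC hC1.symm k hk
      rw [this]; ring
    · refine ⟨fun _ => 0, fun A hA k hk => ?_⟩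
      have hA1 : A 1 = 0 := by
        by_contra h1
        exact hex ⟨fun k => (A 1)⁻¹ ^ k * A k, revrec_scale a b c d g h α A _ hA,
          by simp [inv_mul_cancel₀ h1]⟩
      have := revrec_unique a b c d g h α hp A _ hA (revrec_zero a b c d g h α) hA1 k hk
      rw [this]; ring
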